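/- The binary Reed–Muller code RM(r,m) has minimum Hamming distance exactly 2^{m−r}, for 0 ≤ r ≤ m. -/

import Mathlib

/-- Lee weight on ℤ₄: w_L(0)=0, w_L(1)=w_L(3)=1, w_L(2)=2. -/
def leeW : ZMod 4 → ℕ := fun a => if a = 0 then 0 else if a = 2 then 2 else 1

/-- Lee weight of a vector: sum of coordinate Lee weights. -/
def leeWt {ι : Type*} [Fintype ι] (x : ι → ZMod 4) : ℕ := ∑ i, leeW (x i)

/-- β component of the Gray map: β(0)=β(1)=0, β(2)=β(3)=1. -/
def grayβ : ZMod 4 → ZMod 2 := fun a => if a = 0 ∨ a = 1 then 0 else 1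

/-- γ component of the Gray map: γ(0)=γ(3)=0, γ(1)=γ(2)=1. -/
def grayγ : ZMod 4 → ZMod 2 := fun a => if a = 0 ∨ a = 3 then 0 else 1

/-- The Gray map φ(x) = (β(x), γ(x)), coded with index set ι ⊕ ι for ℤ₂²ⁿ. -/
def gray {ι : Type*} (x : ι → ZMod 4) : ι ⊕ ι → ZMod 2 :=
  Sum.elim (fun i => grayβ (x i)) (fun i => grayγ (x i))

/-- The binary Reed–Muller code RM(r,m): the span of evaluation vectors of all
monomials of degree ≤ r in m Boolean variables, with coordinates indexed by the
points of ℤ₂^m. -/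
def RM (r m : ℕ) : Submodule (ZMod 2) ((Fin m → ZMod 2) → ZMod 2) :=
  Submodule.span (ZMod 2)
    {f | ∃ S : Finset (Fin m), S.card ≤ r ∧ f = fun v => ∏ i ∈ S, v i}

open Finset

lemma zmod2_cases (a : ZMod 2) : a = 0 ∨ a = 1 := by revert a; decide

lemma zmod2_ne_zero_iff (a : ZMod 2) : a ≠ 0 ↔ a = 1 := by revert a; decide

/-- shed: preimage of S under succ -/
noncomputable def shed {m : ℕ} (S : Finset (Fin (m+1))) : Finset (Fin m) :=
  S.preimage Fin.succ (Fin.succ_injective m).injOn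

lemma card_shed {m : ℕ} (S : Finset (Fin (m+1))) (h0 : (0 : Fin (m+1)) ∉ S) :
    (shed S).card = S.card := by
  classical
  rw [shed, Finset.card_preimage]
  congr 1
  apply Finset.filter_true_of_mem
  intro i hi
  rcases Fin.eq_succ_of_ne_zero (fun h => h0 (h ▸ hi)) with ⟨j, rfl⟩
  exact ⟨j, rfl⟩

lemma prod_shed {m : ℕ} (S : Finset (Fin (m+1))) (h0 : (0 : Fin (m+1)) ∉ S)
    (g : Fin (m+1) → ZMod 2) :
    ∏ j ∈ shed S, g j.succ = ∏ i ∈ S, g i := by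
  apply Finset.prod_preimage
  intro x hx hr
  exfalso
  rcases Fin.eq_succ_of_ne_zero (fun h => h0 (h ▸ hx)) with ⟨j, rfl⟩
  exact hr ⟨j, rfl⟩
lemma mem_ev0 {m r : ℕ} {z : (Fin (m+1) → ZMod 2) → ZMod 2} (hz : z ∈ RM r (m+1)) :
    (fun v => z (Fin.cons 0 v)) ∈ RM r m := by
  induction hz using Submodule.span_induction with
  | mem f hf =>
    obtain ⟨S, hS, rfl⟩ := hf
    by_cases h0 : (0 : Fin (m+1)) ∈ S
    · have : (fun v : Fin m → ZMod 2 => ∏ i ∈ S, (Fin.cons 0 v : Fin (m+1) → ZMod 2) i) = 0 := by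
        funext v
        exact Finset.prod_eq_zero h0 (by simp)
      rw [this]; exact Submodule.zero_mem _
    · have : (fun v : Fin m → ZMod 2 => ∏ i ∈ S, (Fin.cons 0 v : Fin (m+1) → ZMod 2) i)
          = fun v => ∏ j ∈ shed S, v j := by
        funext v
        rw [← prod_shed S h0]
        simp
      rw [this]
      exact Submodule.subset_span ⟨shed S, by rw [card_shed S h0]; exact hS, rfl⟩
  | zero => exact Submodule.zero_mem _
  | add x y hx hy ihx ihy => exact Submodule.add_mem _ ihx ihy
  | smul a x hx ihx => exact Submodule.smul_mem _ a ihx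

lemma mem_diff {m r : ℕ} {z : (Fin (m+1) → ZMod 2) → ZMod 2} (hz : z ∈ RM (r+1) (m+1)) :
    (fun v => z (Fin.cons 1 v) - z (Fin.cons 0 v)) ∈ RM r m := by
  induction hz using Submodule.span_induction with
  | mem f hf =>
    obtain ⟨S, hS, rfl⟩ := hf
    by_cases h0 : (0 : Fin (m+1)) ∈ S
    · have h0e : (0 : Fin (m+1)) ∉ S.erase 0 := Finset.notMem_erase _ _
      have key : ∀ b : ZMod 2, ∀ v : Fin m → ZMod 2,
          ∏ i ∈ S, (Fin.cons b v : Fin (m+1) → ZMod 2) i = b * ∏ j ∈ shed (S.erase 0), v j := by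
        intro b v
        rw [← Finset.mul_prod_erase _ _ h0, ← prod_shed _ h0e]
        simp
      have : (fun v : Fin m → ZMod 2 =>
            (∏ i ∈ S, (Fin.cons 1 v : Fin (m+1) → ZMod 2) i)
            - ∏ i ∈ S, (Fin.cons 0 v : Fin (m+1) → ZMod 2) i)
          = fun v => ∏ j ∈ shed (S.erase 0), v j := by
        funext v; rw [key 1 v, key 0 v]; ring
      rw [this]
      refine Submodule.subset_span ⟨shed (S.erase 0), ?_, rfl⟩
      rw [card_shed _ h0e, Finset.card_erase_of_mem h0]
      omega
    · have : (fun v : Fin m → ZMod 2 =>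
            (∏ i ∈ S, (Fin.cons 1 v : Fin (m+1) → ZMod 2) i)
            - ∏ i ∈ S, (Fin.cons 0 v : Fin (m+1) → ZMod 2) i) = 0 := by
        funext v
        rw [← prod_shed S h0 (Fin.cons 1 v), ← prod_shed S h0 (Fin.cons 0 v)]
        simp
      rw [this]; exact Submodule.zero_mem _
  | zero =>
    have : (fun v : Fin m → ZMod 2 =>
        (0 : (Fin (m+1) → ZMod 2) → ZMod 2) (Fin.cons 1 v)
        - (0 : (Fin (m+1) → ZMod 2) → ZMod 2) (Fin.cons 0 v)) = 0 := by
      funext v; simp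
    rw [this]; exact Submodule.zero_mem _
  | add x y hx hy ihx ihy =>
    have : (fun v => (x + y) (Fin.cons 1 v) - (x + y) (Fin.cons 0 v))
        = (fun v => x (Fin.cons 1 v) - x (Fin.cons 0 v))
          + fun v => y (Fin.cons 1 v) - y (Fin.cons 0 v) := by
      funext v; simp only [Pi.add_apply]; ring
    rw [this]; exact Submodule.add_mem _ ihx ihy
  | smul a x hx ihx =>
    have : (fun v => (a • x) (Fin.cons 1 v) - (a • x) (Fin.cons 0 v))
        = a • fun v => x (Fin.cons 1 v) - x (Fin.cons 0 v) := by
      funext v; simp only [Pi.smul_apply, smul_eq_mul]; ring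
    rw [this]; exact Submodule.smul_mem _ a ihx
lemma sum_zmod2 (g : ZMod 2 → ℕ) : ∑ b : ZMod 2, g b = g 0 + g 1 := by
  have : (Finset.univ : Finset (ZMod 2)) = {0, 1} := by decide
  rw [this, Finset.sum_insert (by decide), Finset.sum_singleton]

lemma hammingNorm_split {m : ℕ} (z : (Fin (m+1) → ZMod 2) → ZMod 2) :
    hammingNorm z = hammingNorm (fun v => z (Fin.cons 0 v))
      + hammingNorm (fun v => z (Fin.cons 1 v)) := by
  classical
  simp only [hammingNorm, Finset.card_filter]
  rw [← Fintype.sum_equiv (Fin.consEquiv (fun _ => ZMod 2))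
    (fun p => if z (Fin.cons p.1 p.2) ≠ 0 then 1 else 0)
    (fun v => if z v ≠ 0 then 1 else 0) (fun p => rfl)]
  rw [Fintype.sum_prod_type]
  rw [sum_zmod2 (fun b => ∑ v : Fin m → ZMod 2, if z (Fin.cons b v) ≠ 0 then 1 else 0)]

lemma card_allone {m : ℕ} (S : Finset (Fin m)) :
    (Finset.univ.filter (fun v : Fin m → ZMod 2 => ∀ i ∈ S, v i = 1)).card
      = 2 ^ (m - S.card) := by
  classical
  rw [← Fintype.card_subtype]
  have e : {v : Fin m → ZMod 2 // ∀ i ∈ S, v i = 1} ≃ ({i : Fin m // i ∉ S} → ZMod 2) :=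
    { toFun := fun v j => v.1 j.1
      invFun := fun g => ⟨fun i => if h : i ∈ S then 1 else g ⟨i, h⟩, fun i hi => by simp [hi]⟩
      left_inv := fun v => by
        ext i; dsimp only; split_ifs with h
        · exact (v.2 i h).symm
        · rfl
      right_inv := fun g => by
        funext j; simp [j.2] }
  rw [Fintype.card_congr e, Fintype.card_fun, ZMod.card,
    Fintype.card_subtype_compl, Fintype.card_fin, Fintype.card_coe]
lemma hammingNorm_monomial {m : ℕ} (S : Finset (Fin m)) :
    hammingNorm (fun v : Fin m → ZMod 2 => ∏ i ∈ S, v i) = 2 ^ (m - S.card) := by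
  classical
  rw [hammingNorm, ← card_allone S]
  congr 1
  apply Finset.filter_congr
  intro v _
  rw [Finset.prod_ne_zero_iff]
  constructor
  · intro h i hi; exact (zmod2_ne_zero_iff (v i)).mp (h i hi)
  · intro h i hi; exact (zmod2_ne_zero_iff (v i)).mpr (h i hi)

lemma hnorm_sub_le {ι : Type*} [Fintype ι] (x y : ι → ZMod 2) :
    hammingNorm (x - y) ≤ hammingNorm x + hammingNorm y := by
  rw [sub_eq_neg_add, ← hammingDist_eq_hammingNorm, hammingDist_comm]
  calc hammingDist x y ≤ hammingDist x 0 + hammingDist 0 y := hammingDist_triangle x 0 y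
  _ = hammingNorm x + hammingNorm y := by
      rw [hammingDist_zero_right, hammingDist_comm, hammingDist_zero_right]

lemma norm_one_fun {m : ℕ} :
    hammingNorm (fun _ : Fin m → ZMod 2 => (1 : ZMod 2)) = 2 ^ m := by
  classical
  rw [hammingNorm]
  have : ({v : Fin m → ZMod 2 | (1 : ZMod 2) ≠ 0} : Finset _) = Finset.univ :=
    Finset.filter_true_of_mem (fun _ _ => one_ne_zero)
  rw [this, Finset.card_univ, Fintype.card_fun, ZMod.card, Fintype.card_fin]

lemma RM_lb : ∀ m r : ℕ, ∀ z, z ∈ RM r m → z ≠ 0 → 2 ^ (m - r) ≤ hammingNorm z := by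
  intro m
  induction m with
  | zero =>
    intro r z hz hz0
    have : (0 : ℕ) - r = 0 := by omega
    rw [this, pow_zero]
    exact Nat.one_le_iff_ne_zero.mpr (hammingNorm_ne_zero_iff.mpr hz0)
  | succ m ih =>
    intro r z hz hz0
    match r with
    | 0 =>
      have hset : {f : (Fin (m+1) → ZMod 2) → ZMod 2 |
          ∃ S : Finset (Fin (m+1)), S.card ≤ 0 ∧ f = fun v => ∏ i ∈ S, v i}
          = {fun _ => 1} := by
        ext f
        constructor
        · rintro ⟨S, hS, rfl⟩
          have : S = ∅ := Finset.card_eq_zero.mp (Nat.le_zero.mp hS)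
          subst this; simp
        · rintro rfl
          exact ⟨∅, le_rfl, by simp⟩
      unfold RM at hz
      rw [hset] at hz
      rcases Submodule.mem_span_singleton.mp hz with ⟨a, ha⟩
      rcases zmod2_cases a with h | h
      · exact absurd (by rw [← ha, h, zero_smul]) hz0
      · have hz1 : z = fun _ => 1 := by rw [← ha, h, one_smul]
        rw [hz1, norm_one_fun]
        simp
    | r+1 =>
      have hsplit := hammingNorm_split z
      by_cases hD : (fun v => z (Fin.cons 1 v)) = (fun v => z (Fin.cons 0 v))
      · by_cases hrm : m ≤ r
        · have h1 : (m+1) - (r+1) = 0 := by omega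
          rw [h1, pow_zero]
          exact Nat.one_le_iff_ne_zero.mpr (hammingNorm_ne_zero_iff.mpr hz0)
        · have hg0 : (fun v => z (Fin.cons 0 v)) ∈ RM (r+1) m := mem_ev0 hz
          have hg0ne : (fun v : Fin m → ZMod 2 => z (Fin.cons 0 v)) ≠ 0 := by
            intro h
            apply hz0
            funext v
            have hv : Fin.cons (v 0) (Fin.tail v) = v := Fin.cons_self_tail v
            rcases zmod2_cases (v 0) with h0 | h0
            · rw [← hv, h0]
              exact congrFun h (Fin.tail v)
            · rw [← hv, h0]
              have h2 := congrFun hD (Fin.tail v)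
              rw [congrFun h (Fin.tail v)] at h2
              exact h2
          have hih := ih (r+1) _ hg0 hg0ne
          rw [hsplit, hD]
          have hexp : (m+1) - (r+1) = (m - (r+1)) + 1 := by omega
          rw [hexp, pow_succ]
          omega
      · have hd : (fun v => z (Fin.cons 1 v) - z (Fin.cons 0 v)) ∈ RM r m := mem_diff hz
        have hdne : (fun v : Fin m → ZMod 2 => z (Fin.cons 1 v) - z (Fin.cons 0 v)) ≠ 0 := by
          intro h
          apply hD
          funext v
          have := congrFun h v
          simp only [Pi.zero_apply] at this
          exact sub_eq_zero.mp this
        have hle := ih r _ hd hdne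
        have tri : hammingNorm (fun v : Fin m → ZMod 2 => z (Fin.cons 1 v) - z (Fin.cons 0 v))
            ≤ hammingNorm (fun v : Fin m → ZMod 2 => z (Fin.cons 1 v))
              + hammingNorm (fun v : Fin m → ZMod 2 => z (Fin.cons 0 v)) :=
          hnorm_sub_le _ _
        have hexp : (m+1) - (r+1) = m - r := by omega
        rw [hexp, hsplit]
        omega

/-- RM(r,m) has minimum Hamming distance exactly 2^{m-r}. -/
theorem RM_minDist (m r : ℕ) (hr : r ≤ m) :
    IsLeast {w | ∃ z ∈ RM r m, z ≠ 0 ∧ w = hammingNorm z} (2 ^ (m - r)) := by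
  classical
  constructor
  · have hcard : (Finset.univ.image (Fin.castLE hr)).card = r := by
      rw [Finset.card_image_of_injective _ (Fin.castLE_injective hr), Finset.card_univ,
        Fintype.card_fin]
    refine ⟨fun v => ∏ i ∈ Finset.univ.image (Fin.castLE hr), v i, ?_, ?_, ?_⟩
    · exact Submodule.subset_span ⟨_, le_of_eq hcard, rfl⟩
    · intro h
      have := congrFun h (fun _ => 1)
      simp at this
    · rw [hammingNorm_monomial, hcard]
  · rintro w ⟨z, hz, hz0, rfl⟩
    exact RM_lb m r z hz hz0
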